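/- Let H be a Hermitian matrix on (ℂ²)^⊗n that is a sum over edges {i,j} of a graph of terms h_ij acting only on qubits i and j, and let |v⟩ = |0^n⟩. Then the variance Var_v(H) = ⟨0^n|H²|0^n⟩ − ⟨0^n|H|0^n⟩² equals ⟨0^n|H Q₁ H|0^n⟩ + ⟨0^n|H Q₂ H|0^n⟩, where Q_t is the orthogonal projector onto the span of computational basis states of Hamming weight t. -/
import Mathlib


open Matrix

/-- An n-qubit matrix acting nontrivially only on qubits `i` and `j`. -/
def IsTwoLocal {n : ℕ} (i j : Fin n)
    (h : Matrix (Fin n → Fin 2) (Fin n → Fin 2) ℂ) : Prop :=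
  ∃ h' : Matrix (Fin 2 × Fin 2) (Fin 2 × Fin 2) ℂ,
    ∀ x y, h x y =
      if ∀ k, k ≠ i → k ≠ j → x k = y k
      then h' (x i, x j) (y i, y j) else 0

/- STATEMENT 5: for a 2-local Hamiltonian H = ∑ h_ij and |v⟩ = |0ⁿ⟩,
Var_v(H) = ⟨0ⁿ|H²|0ⁿ⟩ − ⟨0ⁿ|H|0ⁿ⟩² = ⟨0ⁿ|H Q₁ H|0ⁿ⟩ + ⟨0ⁿ|H Q₂ H|0ⁿ⟩. -/
theorem stmt5 {n : ℕ} {E : Type*} [Fintype E]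
    (a b : E → Fin n) (hab : ∀ e, a e ≠ b e)
    (h : E → Matrix (Fin n → Fin 2) (Fin n → Fin 2) ℂ)
    (hherm : ∀ e, (h e).IsHermitian)
    (hloc : ∀ e, IsTwoLocal (a e) (b e) (h e))
    (H : Matrix (Fin n → Fin 2) (Fin n → Fin 2) ℂ)
    (hH : H = ∑ e, h e)
    (Q : ℕ → Matrix (Fin n → Fin 2) (Fin n → Fin 2) ℂ)
    (hQ : ∀ t x y, Q t x y =
      if x = y ∧ (Finset.univ.filter fun k => x k = 1).card = t then 1 else 0)
    (z : Fin n → Fin 2) (hz : z = fun _ => 0) :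
    (H * H) z z - (H z z) ^ 2 = (H * Q 1 * H) z z + (H * Q 2 * H) z z := by
  set w : (Fin n → Fin 2) → ℕ := fun x => (Finset.univ.filter fun k => x k = 1).card with hw
  have hz0 : ∀ k, z k = 0 := by simp [hz]
  -- vanishing lemma: H x z = 0 unless x = z or weight 1 or 2
  have hvan : ∀ x, x ≠ z → w x ≠ 1 → w x ≠ 2 → H x z = 0 := by
    intro x hxz h1 h2
    rw [hH, Matrix.sum_apply]
    refine Finset.sum_eq_zero fun e _ => ?_
    obtain ⟨h', hh'⟩ := hloc e
    rw [hh']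
    split_ifs with hc
    · exfalso
      have hsub : (Finset.univ.filter fun k => x k = 1) ⊆ {a e, b e} := by
        intro k hk
        simp only [Finset.mem_filter] at hk
        by_contra hk2
        simp only [Finset.mem_insert, Finset.mem_singleton, not_or] at hk2
        have h3 := hc k hk2.1 hk2.2
        rw [hz0] at h3
        rw [h3] at hk
        exact absurd hk.2 (by decide)
      have hcard : w x ≤ 2 := by
        calc w x ≤ ({a e, b e} : Finset (Fin n)).card := Finset.card_le_card hsub
        _ ≤ 2 := (Finset.card_insert_le _ _).trans (by simp)
      have h0 : w x = 0 := by omega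
      have hempty : (Finset.univ.filter fun k => x k = 1) = ∅ := Finset.card_eq_zero.mp h0
      apply hxz
      funext k
      rw [hz0]
      have hk : x k ≠ 1 := by
        intro hk1
        have hmem : k ∈ (Finset.univ.filter fun k => x k = 1) := by simp [hk1]
        simp [hempty] at hmem
      omega
    · rfl
  have key : ∀ t : ℕ, (H * Q t * H) z z = ∑ x, if w x = t then H z x * H x z else 0 := by
    intro t
    rw [Matrix.mul_apply]
    have hHQ : ∀ y, (H * Q t) z y = if w y = t then H z y else 0 := by
      intro y
      rw [Matrix.mul_apply]
      rw [Finset.sum_eq_single y]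
      · rw [hQ]
        by_cases ht : w y = t <;> simp [ht, hw]
      · intro x _ hxy
        rw [hQ]
        simp [hxy]
      · simp
    simp only [hHQ]
    refine Finset.sum_congr rfl fun y _ => ?_
    split_ifs <;> simp
  have hsq : (H * H) z z = ∑ x, H z x * H x z := by rw [Matrix.mul_apply]
  have hwz : w z = 0 := by simp [hw, hz, show ((0 : Fin 2) = 1) ↔ False by decide]
  have split : ∀ x : Fin n → Fin 2, H z x * H x z =
      (if x = z then H z x * H x z else 0) +
      ((if w x = 1 then H z x * H x z else 0) +
      (if w x = 2 then H z x * H x z else 0)) := by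
    intro x
    by_cases hxz : x = z
    · subst hxz
      simp [hwz]
    · by_cases h1 : w x = 1
      · simp [hxz, h1]
      · by_cases h2 : w x = 2
        · simp [hxz, h1, h2]
        · simp [hxz, h1, h2, hvan x hxz h1 h2]
  rw [hsq]
  rw [Finset.sum_congr rfl fun x _ => split x]
  rw [Finset.sum_add_distrib, Finset.sum_add_distrib,
    Finset.sum_ite_eq' Finset.univ z, key 1, key 2]
  simp only [Finset.mem_univ, if_true]
  ring
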